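/- For every d ≥ 1 and p ∈ [1,∞) there is a real number θ(d,p) > 0 such that N^{1/d} · W_p(□^d, Δ_N) converges to θ(d,p) as N → ∞, where □^d is the uniform (normalized Lebesgue) probability measure on the unit cube [0,1]^d ⊂ ℝ^d. -/

import Mathlib

open MeasureTheory Metric Filter
open scoped ENNReal

noncomputable section

/-- A transport plan (coupling) between two measures. -/
def IsCoupling {X : Type*} [MeasurableSpace X] (μ ν : Measure X) (π : Measure (X × X)) : Prop :=
  π.map Prod.fst = μ ∧ π.map Prod.snd = ν

/-- The `L^p` Wasserstein distance between two measures of equal mass. -/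
def Wp {X : Type*} [PseudoMetricSpace X] [MeasurableSpace X] (p : ℝ) (μ ν : Measure X) : ℝ≥0∞ :=
  ⨅ (π : Measure (X × X)) (_ : IsCoupling μ ν π),
    (∫⁻ z, edist z.1 z.2 ^ p ∂π) ^ (1 / p)

/-- A measure is supported on at most `N` points. -/
def FinSupported {X : Type*} [MeasurableSpace X] (N : ℕ) (ν : Measure X) : Prop :=
  ∃ S : Finset X, S.card ≤ N ∧ ν ((S : Set X))ᶜ = 0

/-- The `L^p` Wasserstein distance from `μ` to the set `Δ_N` of measures supported
on at most `N` points and having the same total mass as `μ`. -/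
def WpDelta {X : Type*} [PseudoMetricSpace X] [MeasurableSpace X]
    (p : ℝ) (μ : Measure X) (N : ℕ) : ℝ≥0∞ :=
  ⨅ (ν : Measure X) (_ : FinSupported N ν ∧ ν Set.univ = μ Set.univ), Wp p μ ν

/-- The (topological) support of a measure: points all of whose open neighborhoods
have positive measure. -/
def measSupport {X : Type*} [TopologicalSpace X] [MeasurableSpace X] (μ : Measure X) : Set X :=
  {x | ∀ U : Set X, IsOpen U → x ∈ U → 0 < μ U}

/-- The uniform (normalized Lebesgue) probability measure on the unit cube `[0,1]^d ⊂ ℝ^d`. -/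
def cubeMeasure (d : ℕ) : Measure (EuclideanSpace ℝ (Fin d)) :=
  volume.restrict {x : EuclideanSpace ℝ (Fin d) | ∀ i, x i ∈ Set.Icc (0 : ℝ) 1}


-- ===== auxiliary development =====
open Set
open scoped NNReal

section Aux
variable {d : ℕ}

abbrev Xd (d : ℕ) := EuclideanSpace ℝ (Fin d)

def cvec (m : ℕ) (k : Fin d → Fin m) : Xd d := WithLp.toLp 2 (fun i => (k i : ℝ))

@[simp] lemma cvec_apply (m : ℕ) (k : Fin d → Fin m) (i : Fin d) : cvec m k i = k i := rfl

def Tmap (m : ℕ) (k : Fin d → Fin m) : Xd d → Xd d :=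
  fun x => (m:ℝ)⁻¹ • (x + cvec m k)

lemma Tmap_apply (m : ℕ) (k : Fin d → Fin m) (x : Xd d) (i : Fin d) :
    Tmap m k x i = (x i + k i) / m := by
  simp [Tmap, PiLp.smul_apply, PiLp.add_apply, smul_eq_mul, div_eq_inv_mul, mul_comm]
  ring

lemma measurable_Tmap (m : ℕ) (k : Fin d → Fin m) : Measurable (Tmap m k) :=
  (((continuous_id.add continuous_const)).const_smul ((m:ℝ)⁻¹)).measurable

lemma edist_Tmap (m : ℕ) (hm : 1 ≤ m) (k : Fin d → Fin m) (x y : Xd d) :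
    edist (Tmap m k x) (Tmap m k y) = (m : ℝ≥0∞)⁻¹ * edist x y := by
  have hm0 : (m:ℝ≥0) ≠ 0 := Nat.cast_ne_zero.mpr (by omega)
  simp only [Tmap]
  rw [edist_smul₀, edist_add_right]
  have h1 : ‖(m:ℝ)⁻¹‖₊ = (m:ℝ≥0)⁻¹ := by
    simp [nnnorm_inv]
  rw [h1, ENNReal.smul_def, smul_eq_mul]
  simp [ENNReal.coe_inv hm0]

lemma vol_preimage_Tmap (m : ℕ) (hm : 1 ≤ m) (k : Fin d → Fin m) (A : Set (Xd d)) :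
    volume (Tmap m k ⁻¹' A) = ENNReal.ofReal ((m:ℝ)^d) * volume A := by
  have hm0 : (m:ℝ) ≠ 0 := Nat.cast_ne_zero.mpr (by omega)
  have h : Tmap m k ⁻¹' A
      = (fun x : Xd d => x + cvec m k) ⁻¹' ((fun y : Xd d => (m:ℝ)⁻¹ • y) ⁻¹' A) := rfl
  rw [h, measure_preimage_add_right, Measure.addHaar_preimage_smul volume (inv_ne_zero hm0)]
  congr 1
  rw [finrank_euclideanSpace_fin, abs_of_nonneg (by positivity), ← inv_pow, inv_inv]

def cubeSet (d : ℕ) : Set (Xd d) := {x | ∀ i, x i ∈ Set.Icc (0:ℝ) 1}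

lemma measurableSet_cubeSet : MeasurableSet (cubeSet d) := by
  have : cubeSet d = ⋂ i, (fun x : Xd d => x i) ⁻¹' Set.Icc (0:ℝ) 1 := by
    ext x; simp [cubeSet]
  rw [this]
  exact MeasurableSet.iInter fun i => ((measurable_pi_apply i).comp (WithLp.measurable_ofLp 2 (Fin d → ℝ))) measurableSet_Icc

lemma hyperplane_null (i : Fin d) (c : ℝ) : volume {x : Xd d | x i = c} = 0 := by
  have hm : MeasurableSet {f : Fin d → ℝ | f i = c} := by
    have : {f : Fin d → ℝ | f i = c} = (fun f : Fin d → ℝ => f i) ⁻¹' {c} := rfl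
    rw [this]; exact (measurable_pi_apply i) (measurableSet_singleton c)
  have he : {x : Xd d | x i = c} = (MeasurableEquiv.toLp 2 (Fin d → ℝ)).symm ⁻¹' {f | f i = c} := by
    ext x; exact Iff.rfl
  rw [he, (EuclideanSpace.volume_preserving_symm_measurableEquiv_toLp (Fin d)).measure_preimage
    hm.nullMeasurableSet, MeasureTheory.volume_pi]
  exact Measure.pi_hyperplane (α := fun _ : Fin d => ℝ) (fun _ => volume) i c

def Qc (m : ℕ) (k : Fin d → Fin m) : Set (Xd d) :=
  {x | ∀ i, x i ∈ Set.Icc ((k i : ℝ)/m) (((k i : ℝ)+1)/m)}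

def Qh (m : ℕ) (k : Fin d → Fin m) : Set (Xd d) :=
  {x | ∀ i, x i ∈ Set.Ico ((k i : ℝ)/m) (((k i : ℝ)+1)/m)}

def cubeHalf (d : ℕ) : Set (Xd d) := {x | ∀ i, x i ∈ Set.Ico (0:ℝ) 1}

lemma measurableSet_Qh (m : ℕ) (k : Fin d → Fin m) : MeasurableSet (Qh m k) := by
  have : Qh m k = ⋂ i, (fun x : Xd d => x i) ⁻¹' Set.Ico ((k i : ℝ)/m) (((k i : ℝ)+1)/m) := by
    ext x; simp [Qh]
  rw [this]
  exact MeasurableSet.iInter fun i => ((measurable_pi_apply i).comp (WithLp.measurable_ofLp 2 (Fin d → ℝ))) measurableSet_Ico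

lemma Tmap_preimage_Qc (m : ℕ) (hm : 1 ≤ m) (k : Fin d → Fin m) :
    Tmap m k ⁻¹' Qc m k = cubeSet d := by
  have hm0 : (0:ℝ) < m := by exact_mod_cast (by omega : 0 < m)
  ext x
  simp only [Set.mem_preimage, Qc, cubeSet, Set.mem_setOf_eq, Set.mem_Icc, Tmap_apply]
  constructor
  · intro h i
    obtain ⟨h1, h2⟩ := h i
    rw [div_le_div_iff_of_pos_right hm0] at h1
    rw [div_le_div_iff_of_pos_right hm0] at h2
    constructor <;> linarith
  · intro h i
    obtain ⟨h1, h2⟩ := h i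
    constructor
    · rw [div_le_div_iff_of_pos_right hm0]; linarith
    · rw [div_le_div_iff_of_pos_right hm0]; linarith

lemma Qc_diff_Qh_null (m : ℕ) (k : Fin d → Fin m) (A : Set (Xd d)) :
    volume (A ∩ Qc m k) = volume (A ∩ Qh m k) := by
  have hsub : A ∩ Qh m k ⊆ A ∩ Qc m k :=
    Set.inter_subset_inter_right A (fun x hx i => Set.Ico_subset_Icc_self (hx i))
  have hnull : volume ((A ∩ Qc m k) \ (A ∩ Qh m k)) = 0 := by
    refine measure_mono_null (fun x hx => ?_) (measure_iUnion_null
      (fun i : Fin d => hyperplane_null i (((k i : ℝ)+1)/m)))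
    obtain ⟨⟨hxA, hxQc⟩, hn⟩ := hx
    have : ¬ (∀ i, x i ∈ Set.Ico ((k i : ℝ)/m) (((k i : ℝ)+1)/m)) := fun hq => hn ⟨hxA, hq⟩
    push_neg at this
    obtain ⟨i, hi⟩ := this
    refine Set.mem_iUnion.mpr ⟨i, ?_⟩
    have := hxQc i
    simp only [Set.mem_Icc] at this
    simp only [Set.mem_Ico] at hi
    have : x i = ((k i : ℝ)+1)/m := by
      rcases lt_or_eq_of_le this.2 with h | h
      · exact absurd ⟨this.1, h⟩ hi
      · exact h
    exact this
  exact (measure_eq_measure_of_null_diff hsub hnull).symm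

lemma cube_diff_half_null (A : Set (Xd d)) :
    volume (A ∩ cubeSet d) = volume (A ∩ cubeHalf d) := by
  have hsub : A ∩ cubeHalf d ⊆ A ∩ cubeSet d :=
    Set.inter_subset_inter_right A (fun x hx i => Set.Ico_subset_Icc_self (hx i))
  have hnull : volume ((A ∩ cubeSet d) \ (A ∩ cubeHalf d)) = 0 := by
    refine measure_mono_null (fun x hx => ?_) (measure_iUnion_null
      (fun i : Fin d => hyperplane_null i 1))
    obtain ⟨⟨hxA, hxQc⟩, hn⟩ := hx
    have : ¬ (∀ i, x i ∈ Set.Ico (0:ℝ) 1) := fun hq => hn ⟨hxA, hq⟩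
    push_neg at this
    obtain ⟨i, hi⟩ := this
    refine Set.mem_iUnion.mpr ⟨i, ?_⟩
    have h2 := hxQc i
    simp only [Set.mem_Icc] at h2
    simp only [Set.mem_Ico] at hi
    have : x i = 1 := by
      rcases lt_or_eq_of_le h2.2 with h | h
      · exact absurd ⟨h2.1, h⟩ hi
      · exact h
    exact this
  exact (measure_eq_measure_of_null_diff hsub hnull).symm

lemma iUnion_Qh (m : ℕ) (hm : 1 ≤ m) : (⋃ k : Fin d → Fin m, Qh m k) = cubeHalf d := by
  have hm0 : (0:ℝ) < m := by exact_mod_cast (by omega : 0 < m)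
  ext x
  simp only [Set.mem_iUnion, Qh, cubeHalf, Set.mem_setOf_eq, Set.mem_Ico]
  constructor
  · rintro ⟨k, hk⟩ i
    obtain ⟨h1, h2⟩ := hk i
    constructor
    · have : (0:ℝ) ≤ (k i : ℝ)/m := by positivity
      linarith
    · have hk1 : ((k i : ℝ)+1)/m ≤ 1 := by
        rw [div_le_one hm0]
        have : (k i : ℕ) + 1 ≤ m := (k i).2
        exact_mod_cast this
      linarith
  · intro h
    refine ⟨fun i => ⟨⌊m * x i⌋₊, ?_⟩, fun i => ?_⟩
    · have h1 : (0:ℝ) ≤ m * x i := by have := (h i).1; positivity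
      have : (⌊m * x i⌋₊ : ℝ) ≤ m * x i := Nat.floor_le h1
      have h2 : m * x i < m := by
        have := (h i).2
        calc (m:ℝ) * x i < m * 1 := by
              exact mul_lt_mul_of_pos_left this hm0
          _ = m := mul_one _
      exact Nat.floor_lt h1 |>.mpr (by exact_mod_cast h2)
    · have h1 : (0:ℝ) ≤ m * x i := by have := (h i).1; positivity
      constructor
      · show ((⌊(m:ℝ) * x i⌋₊ : ℝ)) / m ≤ x i
        rw [div_le_iff₀ hm0]
        have := Nat.floor_le h1
        linarith [this]
      · show x i < ((⌊(m:ℝ) * x i⌋₊ : ℝ) + 1) / m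
        rw [lt_div_iff₀ hm0]
        have := Nat.lt_floor_add_one ((m:ℝ) * x i)
        linarith [this]

lemma Qh_disjoint (m : ℕ) : Pairwise (Function.onFun Disjoint (fun k : Fin d → Fin m => Qh m k)) := by
  intro k k' hkk'
  rw [Function.onFun, Set.disjoint_left]
  intro x hx hx'
  apply hkk'
  funext i
  have h1 := hx i
  have h2 := hx' i
  simp only [Set.mem_Ico] at h1 h2
  by_contra hne
  have : (k i : ℕ) ≠ (k' i : ℕ) := fun h => hne (Fin.ext h)
  have hm0 : (0:ℝ) < m := by exact_mod_cast (k i).pos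
  rcases this.lt_or_gt with h | h
  · have hle : ((k i : ℝ)+1) ≤ (k' i : ℝ) := by exact_mod_cast h
    have : ((k i : ℝ)+1)/m ≤ (k' i : ℝ)/m := by gcongr
    linarith [h1.2, h2.1, this]
  · have hle : ((k' i : ℝ)+1) ≤ (k i : ℝ) := by exact_mod_cast h
    have : ((k' i : ℝ)+1)/m ≤ (k i : ℝ)/m := by gcongr
    linarith [h2.2, h1.1, this]

lemma cubeM_decomp (m : ℕ) (hm : 1 ≤ m) :
    volume.restrict (cubeSet d) =
      ∑ k : Fin d → Fin m, ((m:ℝ≥0∞)^d)⁻¹ • (volume.restrict (cubeSet d)).map (Tmap m k) := by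
  have hmne : ((m:ℝ≥0∞)^d) ≠ 0 := by
    apply pow_ne_zero
    exact_mod_cast (by omega : m ≠ 0)
  have hmnt : ((m:ℝ≥0∞)^d) ≠ ⊤ := by
    exact ENNReal.pow_ne_top (ENNReal.natCast_ne_top m)
  ext A hA
  rw [Measure.restrict_apply hA, Measure.finset_sum_apply]
  have hterm : ∀ k : Fin d → Fin m,
      (((m:ℝ≥0∞)^d)⁻¹ • (volume.restrict (cubeSet d)).map (Tmap m k)) A
        = volume (A ∩ Qc m k) := by
    intro k
    rw [Measure.smul_apply, smul_eq_mul, Measure.map_apply (measurable_Tmap m k) hA,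
      Measure.restrict_apply (measurable_Tmap m k hA)]
    have h1 : Tmap m k ⁻¹' A ∩ cubeSet d = Tmap m k ⁻¹' (A ∩ Qc m k) := by
      rw [Set.preimage_inter, Tmap_preimage_Qc m hm k]
    rw [h1, vol_preimage_Tmap m hm k]
    have h2 : ENNReal.ofReal ((m:ℝ)^d) = (m:ℝ≥0∞)^d := by
      rw [ENNReal.ofReal_pow (by positivity), ENNReal.ofReal_natCast]
    rw [h2, ← mul_assoc, ENNReal.inv_mul_cancel hmne hmnt, one_mul]
  simp_rw [hterm]
  have hstep : ∀ k : Fin d → Fin m, volume (A ∩ Qc m k) = volume (A ∩ Qh m k) :=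
    fun k => Qc_diff_Qh_null m k A
  simp_rw [hstep]
  have hUnion : (⋃ k : Fin d → Fin m, A ∩ Qh m k) = A ∩ cubeHalf d := by
    rw [← Set.inter_iUnion, iUnion_Qh m hm]
  have hdisj : Pairwise (Function.onFun Disjoint (fun k : Fin d → Fin m => A ∩ Qh m k)) :=
    fun k k' h => ((Qh_disjoint m h).mono inf_le_right inf_le_right)
  rw [← tsum_fintype (L := SummationFilter.unconditional _), ← measure_iUnion hdisj (fun k => hA.inter (measurableSet_Qh m k)), hUnion,
    ← cube_diff_half_null]


lemma cubeMeasure_eq (d : ℕ) : cubeMeasure d = volume.restrict (cubeSet d) := rfl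

lemma volume_cubeSet (d : ℕ) : volume (cubeSet d) = 1 := by
  have he : cubeSet d = (MeasurableEquiv.toLp 2 (Fin d → ℝ)).symm ⁻¹' (Set.univ.pi fun _ => Set.Icc (0:ℝ) 1) := by
    ext x
    simp only [cubeSet, Set.mem_preimage, Set.mem_pi, Set.mem_univ, forall_true_left, mem_setOf_eq,
      MeasurableEquiv.coe_toLp_symm]
  rw [he, (EuclideanSpace.volume_preserving_symm_measurableEquiv_toLp (Fin d)).measure_preimage
    (by measurability), volume_pi_pi]
  simp

lemma cubeMeasure_univ (d : ℕ) : cubeMeasure d Set.univ = 1 := by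
  rw [cubeMeasure_eq, Measure.restrict_apply MeasurableSet.univ, Set.univ_inter]
  exact volume_cubeSet d

lemma measure_map_finset_sum {α β : Type*} [MeasurableSpace α] [MeasurableSpace β] {f : α → β}
    (hf : Measurable f) {ι : Type*} (s : Finset ι) (μ : ι → Measure α) :
    (∑ i ∈ s, μ i).map f = ∑ i ∈ s, (μ i).map f := by
  induction s using Finset.cons_induction with
  | empty => simp
  | cons i s hi ih => rw [Finset.sum_cons, Finset.sum_cons, Measure.map_add _ _ hf, ih]

lemma wp_scale_step (p : ℝ) (hp : 1 ≤ p) (m N : ℕ) (hm : 1 ≤ m)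
    (ν : Measure (Xd d)) (hνf : FinSupported N ν) (hνm : ν Set.univ = cubeMeasure d Set.univ)
    (π : Measure (Xd d × Xd d)) (hπ : IsCoupling (cubeMeasure d) ν π) :
    WpDelta p (cubeMeasure d) (m ^ d * N) ≤
      (m:ℝ≥0∞)⁻¹ * (∫⁻ z, edist z.1 z.2 ^ p ∂π) ^ (1/p) := by
  obtain ⟨S, hScard, hSnull⟩ := hνf
  have hp0 : (0:ℝ) < p := lt_of_lt_of_le one_pos hp
  set c : ℝ≥0∞ := ((m:ℝ≥0∞)^d)⁻¹ with hc
  have hcard : Fintype.card (Fin d → Fin m) = m ^ d := by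
    simp [Fintype.card_fun]
  have hmd_ne : ((m:ℝ≥0∞)^d) ≠ 0 := by
    apply pow_ne_zero; exact_mod_cast (by omega : m ≠ 0)
  have hmd_nt : ((m:ℝ≥0∞)^d) ≠ ⊤ := ENNReal.pow_ne_top (ENNReal.natCast_ne_top m)
  set F : (Fin d → Fin m) → (Xd d × Xd d → Xd d × Xd d) :=
    fun k z => (Tmap m k z.1, Tmap m k z.2) with hF
  have hFmeas : ∀ k, Measurable (F k) := fun k =>
    ((measurable_Tmap m k).comp measurable_fst).prodMk ((measurable_Tmap m k).comp measurable_snd)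
  set ν' : Measure (Xd d) := ∑ k : Fin d → Fin m, c • ν.map (Tmap m k) with hν'
  set π' : Measure (Xd d × Xd d) := ∑ k : Fin d → Fin m, c • π.map (F k) with hπ'
  -- coupling property
  have hfst : π'.map Prod.fst = cubeMeasure d := by
    rw [hπ', measure_map_finset_sum measurable_fst]
    have : ∀ k : Fin d → Fin m, (c • π.map (F k)).map Prod.fst
        = c • (cubeMeasure d).map (Tmap m k) := by
      intro k
      rw [Measure.map_smul, Measure.map_map measurable_fst (hFmeas k)]
      have h1 : (Prod.fst ∘ F k) = (Tmap m k) ∘ Prod.fst := rfl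
      rw [h1, ← Measure.map_map (measurable_Tmap m k) measurable_fst, hπ.1]
    simp_rw [this]
    rw [cubeMeasure_eq, ← cubeM_decomp m hm]
  have hsnd : π'.map Prod.snd = ν' := by
    rw [hπ', measure_map_finset_sum measurable_snd, hν']
    congr 1
    funext k
    rw [Measure.map_smul, Measure.map_map measurable_snd (hFmeas k)]
    have h1 : (Prod.snd ∘ F k) = (Tmap m k) ∘ Prod.snd := rfl
    rw [h1, ← Measure.map_map (measurable_Tmap m k) measurable_snd, hπ.2]
  -- finitely supported
  classical
  have hν'fin : FinSupported (m ^ d * N) ν' := by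
    refine ⟨Finset.univ.biUnion (fun k : Fin d → Fin m => S.image (Tmap m k)), ?_, ?_⟩
    · calc (Finset.univ.biUnion (fun k : Fin d → Fin m => S.image (Tmap m k))).card
          ≤ ∑ k : Fin d → Fin m, (S.image (Tmap m k)).card := Finset.card_biUnion_le
        _ ≤ ∑ _k : Fin d → Fin m, N :=
            Finset.sum_le_sum (fun k _ => Finset.card_image_le.trans hScard)
        _ = m ^ d * N := by rw [Finset.sum_const, Finset.card_univ, hcard, smul_eq_mul]
    · set S' := Finset.univ.biUnion (fun k : Fin d → Fin m => S.image (Tmap m k)) with hS'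
      have hmeas : MeasurableSet ((S' : Set (Xd d)))ᶜ :=
        (S'.finite_toSet.measurableSet).compl
      rw [hν', Measure.finset_sum_apply]
      refine Finset.sum_eq_zero fun k _ => ?_
      rw [Measure.smul_apply, smul_eq_mul,
        Measure.map_apply (measurable_Tmap m k) hmeas]
      have hsub : (Tmap m k) ⁻¹' ((S' : Set (Xd d)))ᶜ ⊆ ((S : Set (Xd d)))ᶜ := by
        intro x hx hxS
        apply hx
        refine Finset.mem_coe.mpr (Finset.mem_biUnion.mpr ⟨k, Finset.mem_univ k, ?_⟩)
        exact Finset.mem_image.mpr ⟨x, Finset.mem_coe.mp hxS, rfl⟩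
      rw [measure_mono_null hsub hSnull, mul_zero]
  have hν'mass : ν' Set.univ = cubeMeasure d Set.univ := by
    rw [hν', Measure.finset_sum_apply]
    have : ∀ k : Fin d → Fin m, (c • ν.map (Tmap m k)) Set.univ = c := by
      intro k
      rw [Measure.smul_apply, smul_eq_mul,
        Measure.map_apply (measurable_Tmap m k) MeasurableSet.univ, Set.preimage_univ,
        hνm, cubeMeasure_univ, mul_one]
    simp_rw [this]
    rw [Finset.sum_const, Finset.card_univ, hcard, nsmul_eq_mul, hc, cubeMeasure_univ]
    rw [Nat.cast_pow, ENNReal.mul_inv_cancel hmd_ne hmd_nt]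
  -- cost computation
  have hedistm : Measurable (fun z : Xd d × Xd d => edist z.1 z.2 ^ p) :=
    (measurable_fst.edist measurable_snd).pow_const p
  have hcost : (∫⁻ z, edist z.1 z.2 ^ p ∂π')
      = ((m:ℝ≥0∞)⁻¹) ^ p * ∫⁻ z, edist z.1 z.2 ^ p ∂π := by
    rw [hπ', lintegral_finset_sum_measure]
    have : ∀ k : Fin d → Fin m, (∫⁻ z, edist z.1 z.2 ^ p ∂(c • π.map (F k)))
        = c * (((m:ℝ≥0∞)⁻¹) ^ p * ∫⁻ z, edist z.1 z.2 ^ p ∂π) := by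
      intro k
      rw [lintegral_smul_measure, lintegral_map hedistm (hFmeas k)]
      congr 1
      have heq : ∀ z : Xd d × Xd d, edist (F k z).1 (F k z).2 ^ p
          = ((m:ℝ≥0∞)⁻¹) ^ p * edist z.1 z.2 ^ p := by
        intro z
        rw [hF]
        simp only
        rw [edist_Tmap m hm, ENNReal.mul_rpow_of_nonneg _ _ hp0.le]
      simp_rw [heq]
      rw [lintegral_const_mul _ hedistm]
    simp_rw [this]
    rw [Finset.sum_const, Finset.card_univ, hcard, nsmul_eq_mul, ← mul_assoc, hc,
      Nat.cast_pow, ENNReal.mul_inv_cancel hmd_ne hmd_nt, one_mul]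
  -- conclude
  have hfinal : (∫⁻ z, edist z.1 z.2 ^ p ∂π') ^ (1/p)
      = (m:ℝ≥0∞)⁻¹ * (∫⁻ z, edist z.1 z.2 ^ p ∂π) ^ (1/p) := by
    rw [hcost, ENNReal.mul_rpow_of_nonneg _ _ (by positivity : (0:ℝ) ≤ 1/p)]
    congr 1
    rw [← ENNReal.rpow_mul, mul_one_div_cancel hp0.ne', ENNReal.rpow_one]
  calc WpDelta p (cubeMeasure d) (m ^ d * N)
      ≤ Wp p (cubeMeasure d) ν' := (iInf_le _ ν').trans (iInf_le _ ⟨hν'fin, hν'mass⟩)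
    _ ≤ (∫⁻ z, edist z.1 z.2 ^ p ∂π') ^ (1/p) := (iInf_le _ π').trans (iInf_le _ ⟨hfst, hsnd⟩)
    _ = (m:ℝ≥0∞)⁻¹ * (∫⁻ z, edist z.1 z.2 ^ p ∂π) ^ (1/p) := hfinal
lemma wpdelta_scale (d : ℕ) (p : ℝ) (hp : 1 ≤ p) (m N : ℕ) (hm : 1 ≤ m) :
    WpDelta p (cubeMeasure d) (m ^ d * N) ≤ (m:ℝ≥0∞)⁻¹ * WpDelta p (cubeMeasure d) N := by
  have hminv0 : ((m:ℝ≥0∞))⁻¹ ≠ 0 := ENNReal.inv_ne_zero.mpr (ENNReal.natCast_ne_top m)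
  by_cases hW : WpDelta p (cubeMeasure d) N = ⊤
  · rw [hW, ENNReal.mul_top hminv0]; exact le_top
  · apply ENNReal.le_of_forall_pos_le_add
    intro ε hε _
    have hlt : WpDelta p (cubeMeasure d) N < WpDelta p (cubeMeasure d) N + ε :=
      ENNReal.lt_add_right hW (by exact_mod_cast hε.ne')
    rw [WpDelta] at hlt
    obtain ⟨ν, hν⟩ := iInf_lt_iff.mp hlt
    obtain ⟨hνc, hν2⟩ := iInf_lt_iff.mp hν
    rw [Wp] at hν2
    obtain ⟨π, hπ⟩ := iInf_lt_iff.mp hν2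
    obtain ⟨hπc, hπ2⟩ := iInf_lt_iff.mp hπ
    calc WpDelta p (cubeMeasure d) (m ^ d * N)
        ≤ (m:ℝ≥0∞)⁻¹ * (∫⁻ z, edist z.1 z.2 ^ p ∂π) ^ (1/p) :=
          wp_scale_step p hp m N hm ν hνc.1 hνc.2 π hπc
      _ ≤ (m:ℝ≥0∞)⁻¹ * (WpDelta p (cubeMeasure d) N + ε) := by
          exact mul_le_mul_right hπ2.le _
      _ = (m:ℝ≥0∞)⁻¹ * WpDelta p (cubeMeasure d) N + (m:ℝ≥0∞)⁻¹ * ε := by rw [mul_add]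
      _ ≤ (m:ℝ≥0∞)⁻¹ * WpDelta p (cubeMeasure d) N + ε := by
          refine add_le_add_right ?_ _
          calc (m:ℝ≥0∞)⁻¹ * ε ≤ 1 * ε := by
                refine mul_le_mul_left (ENNReal.inv_le_one.mpr ?_) _
                exact_mod_cast hm
            _ = ε := one_mul _

lemma wpdelta_antitone (d : ℕ) (p : ℝ) {N M : ℕ} (h : N ≤ M) :
    WpDelta p (cubeMeasure d) M ≤ WpDelta p (cubeMeasure d) N := by
  refine le_iInf fun ν => le_iInf fun hν => ?_
  obtain ⟨⟨S, hS1, hS2⟩, hm⟩ := hν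
  exact (iInf_le _ ν).trans (iInf_le _ ⟨⟨S, hS1.trans h, hS2⟩, hm⟩)

lemma wpdelta_upper (d : ℕ) (hd : 1 ≤ d) (p : ℝ) (hp : 1 ≤ p) :
    WpDelta p (cubeMeasure d) 1 ≤ (d : ℝ≥0∞) := by
  have hp0 : (0:ℝ) < p := lt_of_lt_of_le one_pos hp
  set ν : Measure (Xd d) := Measure.dirac 0 with hν
  have hνf : FinSupported 1 ν := by
    refine ⟨{0}, by simp, ?_⟩
    rw [hν, Finset.coe_singleton,
      Measure.dirac_apply' _ (MeasurableSet.compl (measurableSet_singleton 0))]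
    simp
  have hνm : ν Set.univ = cubeMeasure d Set.univ := by
    rw [hν, cubeMeasure_univ]; simp
  set f : Xd d → Xd d × Xd d := fun x => (x, (0:Xd d)) with hf
  have hfm : Measurable f := measurable_id.prodMk measurable_const
  set π := (cubeMeasure d).map f with hπ
  have hπc : IsCoupling (cubeMeasure d) ν π := by
    constructor
    · rw [hπ, Measure.map_map measurable_fst hfm]
      have : (Prod.fst ∘ f) = id := rfl
      rw [this, Measure.map_id]
    · rw [hπ, Measure.map_map measurable_snd hfm]
      have : (Prod.snd ∘ f) = fun _ => (0 : Xd d) := rfl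
      rw [this, Measure.map_const, cubeMeasure_univ, one_smul]
  have hedistm : Measurable (fun z : Xd d × Xd d => edist z.1 z.2 ^ p) :=
    (measurable_fst.edist measurable_snd).pow_const p
  have hbound : ∀ x ∈ cubeSet d, edist x (0 : Xd d) ^ p ≤ (d:ℝ≥0∞) ^ p := by
    intro x hx
    refine ENNReal.rpow_le_rpow ?_ hp0.le
    rw [edist_dist, dist_zero_right]
    refine le_trans (ENNReal.ofReal_le_ofReal ?_) (le_of_eq (ENNReal.ofReal_natCast d))
    have hnorm : ‖x‖ ≤ Real.sqrt d := by
      rw [EuclideanSpace.norm_eq]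
      refine Real.sqrt_le_sqrt ?_
      calc (∑ i, ‖x i‖ ^ 2) ≤ ∑ _i : Fin d, 1 := by
            refine Finset.sum_le_sum fun i _ => ?_
            have h1 := (hx i).1; have h2 := (hx i).2
            have : ‖x i‖ ≤ 1 := by rw [Real.norm_eq_abs, abs_le]; constructor <;> linarith
            nlinarith [norm_nonneg (x i)]
        _ = (d:ℝ) := by simp
    refine hnorm.trans ?_
    have h1 : (1:ℝ) ≤ d := by exact_mod_cast hd
    calc Real.sqrt d ≤ Real.sqrt ((d:ℝ)^2) := Real.sqrt_le_sqrt (by nlinarith)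
      _ = d := Real.sqrt_sq (by positivity)
  calc WpDelta p (cubeMeasure d) 1
      ≤ Wp p (cubeMeasure d) ν := (iInf_le _ ν).trans (iInf_le _ ⟨hνf, hνm⟩)
    _ ≤ (∫⁻ z, edist z.1 z.2 ^ p ∂π) ^ (1/p) := (iInf_le _ π).trans (iInf_le _ hπc)
    _ ≤ ((d:ℝ≥0∞) ^ p) ^ (1/p) := by
        refine ENNReal.rpow_le_rpow ?_ (by positivity)
        rw [hπ, lintegral_map hedistm hfm]
        have : ∫⁻ x, edist (f x).1 (f x).2 ^ p ∂(cubeMeasure d)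
            = ∫⁻ x in cubeSet d, edist x (0:Xd d) ^ p ∂volume := by
          rw [cubeMeasure_eq]
        rw [this]
        calc ∫⁻ x in cubeSet d, edist x (0:Xd d) ^ p ∂volume
            ≤ ∫⁻ _x in cubeSet d, (d:ℝ≥0∞) ^ p ∂volume := by
              refine setLIntegral_mono (by measurability) hbound
          _ = (d:ℝ≥0∞) ^ p * volume (cubeSet d) := by
              rw [setLIntegral_const]
          _ = (d:ℝ≥0∞) ^ p := by rw [volume_cubeSet, mul_one]
    _ = (d:ℝ≥0∞) := by
        rw [← ENNReal.rpow_mul, mul_one_div_cancel hp0.ne', ENNReal.rpow_one]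


lemma wpdelta_lower (d : ℕ) (hd : 1 ≤ d) (p : ℝ) (hp : 1 ≤ p) :
    ∃ c : ℝ, 0 < c ∧ ∀ N : ℕ, 1 ≤ N →
      ENNReal.ofReal (c * (N:ℝ) ^ (-(1:ℝ)/d)) ≤ WpDelta p (cubeMeasure d) N := by
  classical
  have hp0 : (0:ℝ) < p := lt_of_lt_of_le one_pos hp
  have hd0 : (d:ℝ) ≠ 0 := by
    have : (0:ℝ) < d := by exact_mod_cast (by omega : 0 < d)
    exact this.ne'
  haveI : Nontrivial (Xd d) := by
    have i0 : Fin d := ⟨0, hd⟩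
    refine ⟨⟨WithLp.toLp 2 (fun _ => (1:ℝ) : Fin d → ℝ), 0, fun h => ?_⟩⟩
    have := congrArg (fun v : Xd d => v i0) h
    simp at this
  set B : ℝ≥0∞ := volume (ball (0:Xd d) 1) with hB
  have hBpos : 0 < B := measure_ball_pos _ _ one_pos
  have hBlt : B < ⊤ := measure_ball_lt_top
  set Bt : ℝ := B.toReal with hBt
  have hBt0 : 0 < Bt := ENNReal.toReal_pos hBpos.ne' hBlt.ne
  set c : ℝ := (2*Bt) ^ (-(1:ℝ)/d) / 2 with hcdef
  have hc0 : 0 < c := by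
    have := Real.rpow_pos_of_pos (by positivity : (0:ℝ) < 2*Bt) (-(1:ℝ)/d)
    positivity
  refine ⟨c, hc0, fun N hN => ?_⟩
  have hN0 : (0:ℝ) < N := by exact_mod_cast (by omega : 0 < N)
  set r : ℝ := (2*Bt*N) ^ (-(1:ℝ)/d) with hr
  have hrpos : 0 < r := Real.rpow_pos_of_pos (by positivity) _
  have hsplit : c * (N:ℝ) ^ (-(1:ℝ)/d) = r/2 := by
    rw [hcdef, hr, Real.mul_rpow (by positivity) hN0.le]
    ring
  rw [hsplit]
  refine le_iInf fun ν => le_iInf fun hν => le_iInf fun π => le_iInf fun hπ => ?_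
  obtain ⟨⟨S, hScard, hSnull⟩, hνm⟩ := hν
  set E : Set (Xd d × Xd d) := {z | ENNReal.ofReal r ≤ edist z.1 z.2} with hE
  have hEmeas : MeasurableSet E :=
    measurableSet_le measurable_const (measurable_fst.edist measurable_snd)
  have hπuniv : π Set.univ = 1 := by
    have h2 : (π.map Prod.fst) Set.univ = cubeMeasure d Set.univ := by rw [hπ.1]
    rw [Measure.map_apply measurable_fst MeasurableSet.univ, Set.preimage_univ] at h2
    rw [h2, cubeMeasure_univ]
  -- ball volume computation
  have hballvol : ∀ a : Xd d, volume (ball a r) = ENNReal.ofReal (r ^ (d:ℝ)) * B := by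
    intro a
    rw [hB, Measure.addHaar_ball volume a hrpos.le, finrank_euclideanSpace_fin,
      ← Real.rpow_natCast r d]
  have hrd : r ^ (d:ℝ) = (2*Bt*(N:ℝ))⁻¹ := by
    rw [hr, ← Real.rpow_mul (by positivity), show (-(1:ℝ)/d) * d = -1 by field_simp,
      Real.rpow_neg_one]
    -- measure of the union of balls
  set U : Set (Xd d) := ⋃ a ∈ S, ball a r with hU
  have hUmeas : MeasurableSet U :=
    MeasurableSet.biUnion S.countable_toSet fun a _ => measurableSet_ball
  have hUvol : volume U ≤ 1/2 := by
    calc volume U ≤ ∑ a ∈ S, volume (ball a r) := measure_biUnion_finset_le S _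
      _ = S.card • (ENNReal.ofReal (r ^ (d:ℝ)) * B) := by
          rw [Finset.sum_congr rfl fun a _ => hballvol a, Finset.sum_const]
      _ ≤ N • (ENNReal.ofReal (r ^ (d:ℝ)) * B) := smul_le_smul_of_nonneg_right ?hcard (by simp)
      _ = (N:ℝ≥0∞) * (ENNReal.ofReal (r ^ (d:ℝ)) * B) := by rw [nsmul_eq_mul]
      _ = 1/2 := ?heq
    case hcard => exact hScard
    case heq =>
      rw [hrd, ← ENNReal.ofReal_toReal hBlt.ne, ← hBt,
        ← ENNReal.ofReal_natCast N, ← ENNReal.ofReal_mul (by positivity),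
        ← ENNReal.ofReal_mul (by positivity)]
      rw [show (N:ℝ) * ((2*Bt*(N:ℝ))⁻¹ * Bt) = 1/2 by field_simp]
      rw [ENNReal.ofReal_div_of_pos (by norm_num)]
      norm_num
  -- complement of E is small
  have hcompl : π Eᶜ ≤ 1/2 := by
    have hsub : Eᶜ ⊆ (Prod.snd ⁻¹' ((S : Set (Xd d))ᶜ)) ∪ (Prod.fst ⁻¹' U) := by
      intro z hz
      by_cases hz2 : z.2 ∈ (S : Set (Xd d))
      · right
        simp only [Set.mem_preimage]
        have hlt : edist z.1 z.2 < ENNReal.ofReal r := by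
          simpa [hE, not_le] using hz
        have hdist : dist z.1 z.2 < r := by
          rw [edist_dist] at hlt
          exact (ENNReal.ofReal_lt_ofReal_iff_of_nonneg dist_nonneg).mp hlt
        exact Set.mem_biUnion hz2 (mem_ball.mpr hdist)
      · left; exact hz2
    have hSmeas : MeasurableSet ((S : Set (Xd d))ᶜ) := (S.finite_toSet.measurableSet).compl
    calc π Eᶜ ≤ π ((Prod.snd ⁻¹' ((S : Set (Xd d))ᶜ)) ∪ (Prod.fst ⁻¹' U)) := measure_mono hsub
      _ ≤ π (Prod.snd ⁻¹' ((S : Set (Xd d))ᶜ)) + π (Prod.fst ⁻¹' U) := measure_union_le _ _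
      _ ≤ 0 + 1/2 := by
          refine add_le_add ?_ ?_
          · rw [← Measure.map_apply measurable_snd hSmeas, hπ.2, hSnull]
          · rw [← Measure.map_apply measurable_fst hUmeas, hπ.1, cubeMeasure_eq,
              Measure.restrict_apply hUmeas]
            exact (measure_mono Set.inter_subset_left).trans hUvol
      _ = 1/2 := by rw [zero_add]
  have hEhalf : (1/2 : ℝ≥0∞) ≤ π E := by
    have hsum : π E + π Eᶜ = 1 := by rw [measure_add_measure_compl hEmeas, hπuniv]
    have h3 : (1/2 : ℝ≥0∞) + 1/2 ≤ π E + 1/2 := by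
      calc (1/2 : ℝ≥0∞) + 1/2 = 1 := by rw [one_div, ENNReal.inv_two_add_inv_two]
        _ = π E + π Eᶜ := hsum.symm
        _ ≤ π E + 1/2 := add_le_add_right hcompl _
    exact (ENNReal.add_le_add_iff_right (by simp : (1/2:ℝ≥0∞) ≠ ⊤)).mp h3
  -- cost lower bound
  have hcost : ENNReal.ofReal r ^ p * (1/2 : ℝ≥0∞) ≤ ∫⁻ z, edist z.1 z.2 ^ p ∂π := by
    have hpt : ∀ z : Xd d × Xd d, E.indicator (fun _ => ENNReal.ofReal r ^ p) z
        ≤ edist z.1 z.2 ^ p := by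
      intro z
      by_cases hz : z ∈ E
      · rw [Set.indicator_of_mem hz]
        exact ENNReal.rpow_le_rpow hz hp0.le
      · rw [Set.indicator_of_notMem hz]
        exact zero_le
    calc ENNReal.ofReal r ^ p * (1/2 : ℝ≥0∞)
        ≤ ENNReal.ofReal r ^ p * π E := mul_le_mul_right hEhalf _
      _ = ∫⁻ z, E.indicator (fun _ => ENNReal.ofReal r ^ p) z ∂π := by
          rw [lintegral_indicator_const hEmeas]
      _ ≤ ∫⁻ z, edist z.1 z.2 ^ p ∂π := lintegral_mono fun z => hpt z
  -- conclude
  have hhalf : (ENNReal.ofReal (r/2)) ^ p ≤ ENNReal.ofReal r ^ p * (1/2 : ℝ≥0∞) := by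
    have h1 : ENNReal.ofReal (r/2) = ENNReal.ofReal r * (1/2 : ℝ≥0∞) := by
      rw [show r/2 = r * (1/2 : ℝ) by ring, ENNReal.ofReal_mul hrpos.le]
      congr 1
      rw [ENNReal.ofReal_div_of_pos (by norm_num)]
      norm_num
    rw [h1, ENNReal.mul_rpow_of_nonneg _ _ hp0.le]
    refine mul_le_mul_right ?_ _
    calc (1/2 : ℝ≥0∞) ^ p ≤ (1/2 : ℝ≥0∞) ^ (1:ℝ) :=
          ENNReal.rpow_le_rpow_of_exponent_ge (by norm_num) hp
      _ = 1/2 := ENNReal.rpow_one _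
  calc ENNReal.ofReal (r/2)
      = ((ENNReal.ofReal (r/2)) ^ p) ^ (1/p) := by
        rw [← ENNReal.rpow_mul, mul_one_div_cancel hp0.ne', ENNReal.rpow_one]
    _ ≤ (ENNReal.ofReal r ^ p * (1/2 : ℝ≥0∞)) ^ (1/p) :=
        ENNReal.rpow_le_rpow hhalf (by positivity)
    _ ≤ (∫⁻ z, edist z.1 z.2 ^ p ∂π) ^ (1/p) :=
        ENNReal.rpow_le_rpow hcost (by positivity)


end Aux
-- ===== end auxiliary development =====

theorem cube_approximation_constant
    (d : ℕ) (hd : 1 ≤ d) (p : ℝ) (hp : 1 ≤ p) :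
    ∃ θ : ℝ, 0 < θ ∧
      Tendsto (fun N : ℕ => (N : ℝ) ^ (1 / (d : ℝ)) * (WpDelta p (cubeMeasure d) N).toReal)
        atTop (nhds θ) := by
  classical
  obtain ⟨c, hc0, hlow⟩ := wpdelta_lower d hd p hp
  have hd0 : (0:ℝ) < d := by exact_mod_cast (by omega : 0 < d)
  have h1d : (0:ℝ) < 1/(d:ℝ) := by positivity
  set W : ℕ → ℝ≥0∞ := fun N => WpDelta p (cubeMeasure d) N with hWdef
  have hWle : ∀ N : ℕ, 1 ≤ N → W N ≤ (d:ℝ≥0∞) := fun N hN =>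
    (wpdelta_antitone d p hN).trans (wpdelta_upper d hd p hp)
  have hWne : ∀ N : ℕ, 1 ≤ N → W N ≠ ⊤ := fun N hN =>
    ((hWle N hN).trans_lt (ENNReal.natCast_lt_top d)).ne
  set a : ℕ → ℝ := fun N => (W N).toReal with hadef
  have ha_nonneg : ∀ N, 0 ≤ a N := fun N => ENNReal.toReal_nonneg
  have ha_anti : ∀ N M : ℕ, 1 ≤ N → N ≤ M → a M ≤ a N := fun N M hN hNM =>
    ENNReal.toReal_mono (hWne N hN) (wpdelta_antitone d p hNM)
  have ha_low : ∀ N : ℕ, 1 ≤ N → c * (N:ℝ) ^ (-(1:ℝ)/d) ≤ a N := by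
    intro N hN
    exact (ENNReal.ofReal_le_iff_le_toReal (hWne N hN)).mp (hlow N hN)
  have ha_scale : ∀ m N : ℕ, 1 ≤ m → 1 ≤ N → a (m ^ d * N) ≤ a N / m := by
    intro m N hm hN
    have h1 := wpdelta_scale d p hp m N hm
    have hne : (m:ℝ≥0∞)⁻¹ * W N ≠ ⊤ :=
      ENNReal.mul_ne_top (ENNReal.inv_ne_top.mpr (by exact_mod_cast (by omega : m ≠ 0))) (hWne N hN)
    calc a (m ^ d * N) ≤ ((m:ℝ≥0∞)⁻¹ * W N).toReal := ENNReal.toReal_mono hne h1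
      _ = a N / m := by
          rw [ENNReal.toReal_mul, ENNReal.toReal_inv, ENNReal.toReal_natCast]
          ring
  set g : ℕ → ℝ := fun N => (N:ℝ) ^ (1/(d:ℝ)) * a N with hgdef
  have hg_low : ∀ N : ℕ, 1 ≤ N → c ≤ g N := by
    intro N hN
    have hN0 : (0:ℝ) < N := by exact_mod_cast (by omega : 0 < N)
    have h1 : (N:ℝ) ^ (1/(d:ℝ)) * (c * (N:ℝ) ^ (-(1:ℝ)/d)) ≤ g N :=
      mul_le_mul_of_nonneg_left (ha_low N hN) (by positivity)
    calc c = (N:ℝ) ^ (1/(d:ℝ)) * (c * (N:ℝ) ^ (-(1:ℝ)/d)) := by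
          rw [mul_comm c, ← mul_assoc, ← Real.rpow_add hN0,
            show (1/(d:ℝ)) + (-(1:ℝ)/d) = 0 by ring, Real.rpow_zero, one_mul]
      _ ≤ g N := h1
  -- the set of values
  set S : Set ℝ := g '' {N : ℕ | 1 ≤ N} with hSdef
  have h1mem : (1:ℕ) ∈ {N : ℕ | 1 ≤ N} := Set.mem_setOf_eq ▸ le_refl 1
  have hSne : S.Nonempty := ⟨g 1, ⟨1, h1mem, rfl⟩⟩
  have hSbdd : BddBelow S := ⟨c, fun x hx => by
    obtain ⟨N, hN, rfl⟩ := hx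
    exact hg_low N hN⟩
  set θ : ℝ := sInf S with hθdef
  have hθc : c ≤ θ := le_csInf hSne fun x hx => by
    obtain ⟨N, hN, rfl⟩ := hx
    exact hg_low N hN
  have hθle : ∀ N : ℕ, 1 ≤ N → θ ≤ g N := fun N hN => csInf_le hSbdd ⟨N, hN, rfl⟩
  refine ⟨θ, lt_of_lt_of_le hc0 hθc, ?_⟩
  have hgoal : Tendsto g atTop (nhds θ) := by
    rw [tendsto_order]
    constructor
    · intro b hb
      filter_upwards [eventually_ge_atTop 1] with N hN
      exact lt_of_lt_of_le hb (hθle N hN)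
    · intro b hb
      obtain ⟨s, hsS, hs⟩ := exists_lt_of_csInf_lt hSne (show θ < (θ+b)/2 by linarith)
      obtain ⟨N₀, hN₀1, rfl⟩ := hsS
      have hN₀1' : (1:ℕ) ≤ N₀ := hN₀1
      have hN₀0 : (0:ℝ) < N₀ := by exact_mod_cast (by omega : 0 < N₀)
      set x : ℕ → ℝ := fun N => ((N:ℝ)/N₀) ^ (1/(d:ℝ)) with hxdef
      -- the comparison function tends to g N₀
      have t1 : Tendsto x atTop atTop :=
        (tendsto_rpow_atTop h1d).comp (tendsto_natCast_atTop_atTop.atTop_div_const hN₀0)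
      have t2 : Tendsto (fun N => ((⌊x N⌋₊:ℝ)) / x N) atTop (nhds 1) :=
        tendsto_nat_floor_div_atTop.comp t1
      have t3 : Tendsto (fun N => x N / (⌊x N⌋₊:ℝ)) atTop (nhds 1) := by
        have := t2.inv₀ one_ne_zero
        simpa [inv_div] using this
      have hψ : Tendsto (fun N => (x N / (⌊x N⌋₊:ℝ)) * g N₀) atTop (nhds (g N₀)) := by
        simpa using t3.mul_const (g N₀)
      have hψlt : ∀ᶠ N in atTop, (x N / (⌊x N⌋₊:ℝ)) * g N₀ < b :=
        hψ.eventually_lt_const (by linarith)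
      -- eventual comparison
      have hcomp : ∀ N : ℕ, N₀ ≤ N → g N ≤ (x N / (⌊x N⌋₊:ℝ)) * g N₀ := by
        intro N hNge
        have hN1 : 1 ≤ N := le_trans hN₀1' hNge
        have hN0 : (0:ℝ) < N := by exact_mod_cast (by omega : 0 < N)
        have hx' : x N = ((N:ℝ)/N₀) ^ (1/(d:ℝ)) := rfl
        have hxN1 : (1:ℝ) ≤ x N := by
          rw [hx']
          calc (1:ℝ) = 1 ^ (1/(d:ℝ)) := (Real.one_rpow _).symm
            _ ≤ ((N:ℝ)/N₀) ^ (1/(d:ℝ)) := by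
                refine Real.rpow_le_rpow (by norm_num) ?_ h1d.le
                rw [le_div_iff₀ hN₀0, one_mul]
                exact_mod_cast hNge
        set m : ℕ := ⌊x N⌋₊ with hmdef
        have hm1 : 1 ≤ m := Nat.le_floor (by exact_mod_cast hxN1)
        have hm0 : (0:ℝ) < m := by exact_mod_cast (by omega : 0 < m)
        have hmle : (m:ℝ) ≤ x N := Nat.floor_le (by linarith)
        have hxNd : (x N) ^ (d:ℕ) = (N:ℝ)/N₀ := by
          rw [hx', ← Real.rpow_natCast (((N:ℝ)/N₀) ^ (1/(d:ℝ))) d,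
            ← Real.rpow_mul (by positivity), one_div_mul_cancel hd0.ne', Real.rpow_one]
        have hkey : (m ^ d * N₀ : ℕ) ≤ N := by
          have hr : ((m ^ d * N₀ : ℕ) : ℝ) ≤ (N:ℝ) := by
            push_cast
            calc (m:ℝ) ^ d * N₀ ≤ (x N) ^ d * N₀ := by
                  refine mul_le_mul_of_nonneg_right ?_ hN₀0.le
                  exact pow_le_pow_left₀ hm0.le hmle d
              _ = ((N:ℝ)/N₀) * N₀ := by rw [hxNd]
              _ = N := div_mul_cancel₀ _ hN₀0.ne'
          exact_mod_cast hr
        have h1mN : 1 ≤ m ^ d * N₀ := by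
          have : 1 ≤ m ^ d := Nat.one_le_pow _ _ (by omega)
          exact Nat.one_le_iff_ne_zero.mpr (by positivity)
        have haN : a N ≤ a N₀ / m :=
          (ha_anti _ _ h1mN hkey).trans (ha_scale m N₀ hm1 hN₀1')
        have hNsplit : (N:ℝ) ^ (1/(d:ℝ)) = x N * (N₀:ℝ) ^ (1/(d:ℝ)) := by
          rw [hx', Real.div_rpow (by positivity) hN₀0.le, div_mul_cancel₀]
          exact (Real.rpow_pos_of_pos hN₀0 _).ne'
        calc g N = (N:ℝ) ^ (1/(d:ℝ)) * a N := rfl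
          _ ≤ (N:ℝ) ^ (1/(d:ℝ)) * (a N₀ / m) :=
              mul_le_mul_of_nonneg_left haN (by positivity)
          _ = (x N / (m:ℝ)) * ((N₀:ℝ) ^ (1/(d:ℝ)) * a N₀) := by
              rw [hNsplit]; field_simp
          _ = (x N / (⌊x N⌋₊:ℝ)) * g N₀ := rfl
      filter_upwards [hψlt, eventually_ge_atTop N₀] with N h1 h2
      exact lt_of_le_of_lt (hcomp N h2) h1
  exact hgoal
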